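/- Let U ⊆ ℝⁿ be open and k, l positive integers. If v₁, v₂ : U → ℝ are nonnegative with v₁^{1/(2kl)}, v₂^{1/(2kl)} of class C^k on U, then (v₁²/(v₁+v₂))^{1/l}, defined to be 0 where v₁ = v₂ = 0, is of class C^k on U. -/

import Mathlib

open scoped ContDiff
open Asymptotics

private lemma one_le_inf : (1 : WithTop ℕ∞) ≤ ∞ := by exact_mod_cast le_top

private lemma inf_add_one : (∞ : WithTop ℕ∞) + 1 ≤ ∞ := by
  simp

private lemma homog_bound (Θ : ℝ × ℝ → ℝ)
    (hΘs : ∀ z : ℝ × ℝ, z ≠ 0 → ContDiffAt ℝ ∞ Θ z)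
    (hΘh : ∀ t : ℝ, 0 < t → ∀ z : ℝ × ℝ, Θ (t • z) = Θ z) :
    ∃ M : ℝ, ∀ z, |Θ z| ≤ M := by
  obtain ⟨M₁, hM₁⟩ := (isCompact_sphere (0 : ℝ × ℝ) 1).exists_bound_of_continuousOn
    (fun z hz => ((hΘs z (by
        intro h; rw [h] at hz; simp [mem_sphere_zero_iff_norm] at hz
      )).continuousAt.continuousWithinAt))
  refine ⟨max M₁ |Θ 0|, fun z => ?_⟩
  rcases eq_or_ne z 0 with rfl | hz
  · exact le_max_right _ _
  · have hn : (0:ℝ) < ‖z‖ := norm_pos_iff.mpr hz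
    have h1 : Θ (‖z‖⁻¹ • z) = Θ z := hΘh _ (inv_pos.mpr hn) z
    have h2 : ‖z‖⁻¹ • z ∈ Metric.sphere (0 : ℝ × ℝ) 1 := by
      simp [mem_sphere_zero_iff_norm, norm_smul, abs_of_pos (inv_pos.mpr hn),
        inv_mul_cancel₀ hn.ne']
    calc |Θ z| = ‖Θ (‖z‖⁻¹ • z)‖ := by rw [h1]; exact (Real.norm_eq_abs _).symm
    _ ≤ M₁ := hM₁ _ h2
    _ ≤ _ := le_max_left _ _

private lemma homog_deriv (Θ : ℝ × ℝ → ℝ)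
    (hΘs : ∀ z : ℝ × ℝ, z ≠ 0 → ContDiffAt ℝ ∞ Θ z)
    (hΘh : ∀ t : ℝ, 0 < t → ∀ z : ℝ × ℝ, Θ (t • z) = Θ z) (w : ℝ × ℝ)
    (t : ℝ) (ht : 0 < t) (z : ℝ × ℝ) :
    (t • z).1 * fderiv ℝ Θ (t • z) w = z.1 * fderiv ℝ Θ z w := by
  rcases eq_or_ne z 0 with rfl | hz
  · simp
  · have htz : t • z ≠ 0 := smul_ne_zero ht.ne' hz
    have h2 : HasFDerivAt Θ (fderiv ℝ Θ (t • z)) (t • z) :=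
      (((hΘs _ htz).differentiableAt (by simp)).hasFDerivAt)
    have h1 : HasFDerivAt (fun w : ℝ × ℝ => t • w) (t • ContinuousLinearMap.id ℝ (ℝ × ℝ)) z :=
      (hasFDerivAt_id z).const_smul t
    have h3 : HasFDerivAt (fun w => Θ (t • w))
        ((fderiv ℝ Θ (t • z)).comp (t • ContinuousLinearMap.id ℝ (ℝ × ℝ))) z := h2.comp z h1
    have h4 : (fun w => Θ (t • w)) = Θ := funext fun w => hΘh t ht w
    rw [h4] at h3
    rw [h3.fderiv]
    simp only [ContinuousLinearMap.comp_apply, ContinuousLinearMap.smul_apply,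
      ContinuousLinearMap.id_apply, map_smul, Prod.smul_fst, smul_eq_mul]
    ring


private theorem key {n k : ℕ} {U : Set (Fin n → ℝ)} (hU : IsOpen U)
    {f g : (Fin n → ℝ) → ℝ} (hf : ContDiffOn ℝ k f U) (hg : ContDiffOn ℝ k g U)
    (j : ℕ) : j ≤ k → ∀ p : ℕ, j + 1 ≤ p →
    ∀ Θ : ℝ × ℝ → ℝ, (∀ z : ℝ × ℝ, z ≠ 0 → ContDiffAt ℝ ∞ Θ z) →
    (∀ t : ℝ, 0 < t → ∀ z : ℝ × ℝ, Θ (t • z) = Θ z) →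
    ∀ (E : Type) [NormedAddCommGroup E] [NormedSpace ℝ E], ∀ u : (Fin n → ℝ) → E,
    ContDiffOn ℝ j u U →
    ContDiffOn ℝ j (fun x => (f x ^ p * Θ (f x, g x)) • u x) U := by
  induction j with
  | zero =>
    intro hjk p hp Θ hΘs hΘh E i1 i2 u hu
    simp only [Nat.cast_zero, contDiffOn_zero] at hu ⊢
    intro x hx
    have cf : ContinuousWithinAt f U x := hf.continuousOn x hx
    have cg : ContinuousWithinAt g U x := hg.continuousOn x hx
    have cu : ContinuousWithinAt u U x := hu x hx
    by_cases hz : ((f x, g x) : ℝ × ℝ) = 0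
    · have hfx : f x = 0 := by simpa using congrArg Prod.fst hz
      obtain ⟨M, hM⟩ := homog_bound Θ hΘs hΘh
      have hM0 : 0 ≤ M := le_trans (abs_nonneg _) (hM 0)
      have hFx : (f x ^ p * Θ (f x, g x)) • u x = 0 := by
        simp [hfx, zero_pow (by omega : p ≠ 0)]
      have hlim : Filter.Tendsto (fun y => |f y| ^ p * M * ‖u y‖) (nhdsWithin x U)
          (nhds (|f x| ^ p * M * ‖u x‖)) :=
        (((cf.abs.pow p).mul continuousWithinAt_const).mul cu.norm)
      have hlim0 : Filter.Tendsto (fun y => |f y| ^ p * M * ‖u y‖) (nhdsWithin x U) (nhds 0) := by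
        simpa [hfx, zero_pow (by omega : p ≠ 0)] using hlim
      have hsq : Filter.Tendsto (fun y => (f y ^ p * Θ (f y, g y)) • u y) (nhdsWithin x U)
          (nhds (0 : E)) := by
        apply squeeze_zero_norm' _ hlim0
        filter_upwards with y
        rw [norm_smul]
        have : ‖f y ^ p * Θ (f y, g y)‖ ≤ |f y| ^ p * M := by
          rw [Real.norm_eq_abs, abs_mul, abs_pow]
          exact mul_le_mul_of_nonneg_left (hM _) (by positivity)
        exact mul_le_mul_of_nonneg_right this (norm_nonneg _) |>.trans
          (le_of_eq (by ring))
      have := hFx ▸ hsq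
      exact this
    · have hΘc : ContinuousAt Θ (f x, g x) := (hΘs _ hz).continuousAt
      have hcc : ContinuousWithinAt (fun y => Θ (f y, g y)) U x :=
        hΘc.comp_continuousWithinAt (f := fun y => (f y, g y)) (cf.prodMk cg)
      exact (((cf.pow p).mul hcc).smul cu)
  | succ j ih =>
    intro hjk p hp Θ hΘs hΘh E i1 i2 u hu
    obtain ⟨q, rfl⟩ : ∃ q, p = q + 1 := ⟨p - 1, by omega⟩
    have hq : j + 1 ≤ q := by omega
    have hkc : (1 : WithTop ℕ∞) ≤ (k : WithTop ℕ∞) := by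
      exact_mod_cast (by omega : (1:ℕ) ≤ k)
    have hfd : DifferentiableOn ℝ f U := hf.differentiableOn (by exact_mod_cast (by omega : k ≠ 0))
    have hgd : DifferentiableOn ℝ g U := hg.differentiableOn (by exact_mod_cast (by omega : k ≠ 0))
    have hud : DifferentiableOn ℝ u U := hu.differentiableOn
      (by simp)
    have claim1 : ∀ x ∈ U, HasFDerivAt (fun y => (f y ^ (q+1) * Θ (f y, g y)) • u y)
        ((f x ^ q * Θ (f x, g x)) • (((q:ℝ)+1) • (fderiv ℝ f x).smulRight (u x))
          + (f x ^ q * Θ (f x, g x)) • (f x • fderiv ℝ u x)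
          + (f x ^ q * ((f x, g x).1 * fderiv ℝ Θ (f x, g x) (1, 0))) •
              ((fderiv ℝ f x).smulRight (u x))
          + (f x ^ q * ((f x, g x).1 * fderiv ℝ Θ (f x, g x) (0, 1))) •
              ((fderiv ℝ g x).smulRight (u x))) x := by
      intro x hx
      have hdf : HasFDerivAt f (fderiv ℝ f x) x :=
        (hfd.differentiableAt (hU.mem_nhds hx)).hasFDerivAt
      have hdg : HasFDerivAt g (fderiv ℝ g x) x :=
        (hgd.differentiableAt (hU.mem_nhds hx)).hasFDerivAt
      have hdu : HasFDerivAt u (fderiv ℝ u x) x :=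
        (hud.differentiableAt (hU.mem_nhds hx)).hasFDerivAt
      by_cases hz : ((f x, g x) : ℝ × ℝ) = 0
      · have hfx : f x = 0 := by simpa using congrArg Prod.fst hz
        have hT0 : ((f x ^ q * Θ (f x, g x)) • (((q:ℝ)+1) • (fderiv ℝ f x).smulRight (u x))
          + (f x ^ q * Θ (f x, g x)) • (f x • fderiv ℝ u x)
          + (f x ^ q * ((f x, g x).1 * fderiv ℝ Θ (f x, g x) (1, 0))) •
              ((fderiv ℝ f x).smulRight (u x))
          + (f x ^ q * ((f x, g x).1 * fderiv ℝ Θ (f x, g x) (0, 1))) •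
              ((fderiv ℝ g x).smulRight (u x))) = 0 := by
          simp [hfx, zero_pow (by omega : q ≠ 0)]
        rw [hT0]
        apply HasFDerivAtFilter.of_isLittleO
        obtain ⟨M, hM⟩ := homog_bound Θ hΘs hΘh
        have hM0 : 0 ≤ M := le_trans (abs_nonneg _) (hM 0)
        have hub : ∀ᶠ y in nhds x, ‖u y‖ ≤ ‖u x‖ + 1 :=
          ((hu.continuousOn.continuousAt (hU.mem_nhds hx)).norm.eventually_lt_const
            (lt_add_one ‖u x‖)).mono fun y hy => hy.le
        have h1 : (fun y => f y) =O[nhds x] fun y => y - x := by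
          simpa [hfx] using hdf.isBigO_sub
        have h2 : (fun y => f y ^ (q+1)) =O[nhds x] fun y => ‖y - x‖ ^ (q+1) :=
          h1.norm_right.pow _
        have h3 : (fun y => (f y ^ (q+1) * Θ (f y, g y)) • u y) =O[nhds x]
            fun y => f y ^ (q+1) := by
          rw [Asymptotics.isBigO_iff]
          refine ⟨M * (‖u x‖ + 1), ?_⟩
          filter_upwards [hub] with y hy
          rw [norm_smul, Real.norm_eq_abs, abs_mul]
          calc |f y ^ (q+1)| * |Θ (f y, g y)| * ‖u y‖
              ≤ |f y ^ (q+1)| * M * (‖u x‖ + 1) :=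
                mul_le_mul (mul_le_mul_of_nonneg_left (hM _) (abs_nonneg _)) hy
                  (norm_nonneg _) (mul_nonneg (abs_nonneg _) hM0)
            _ = M * (‖u x‖ + 1) * ‖f y ^ (q+1)‖ := by rw [Real.norm_eq_abs]; ring
        have h4 := (h3.trans h2).trans_isLittleO
          (isLittleO_pow_sub_sub x (by omega : 1 < q + 1))
        have hFx0 : (f x ^ (q+1) * Θ (f x, g x)) • u x = 0 := by simp [hfx]
        simpa [hFx0, Function.comp_def] using h4
      · have hdΘ : HasFDerivAt Θ (fderiv ℝ Θ (f x, g x)) (f x, g x) :=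
          ((hΘs _ hz).differentiableAt (by simp)).hasFDerivAt
        have hfg : HasFDerivAt (fun y => (f y, g y))
            ((fderiv ℝ f x).prod (fderiv ℝ g x)) x := hdf.prodMk hdg
        have hcomp : HasFDerivAt (fun y => Θ (f y, g y))
            ((fderiv ℝ Θ (f x, g x)).comp ((fderiv ℝ f x).prod (fderiv ℝ g x))) x :=
          hdΘ.comp x hfg
        have hpow : HasFDerivAt (fun y => f y ^ (q+1))
            ((((q+1 : ℕ):ℝ) * f x ^ q) • fderiv ℝ f x) x := by
          have h := (hasDerivAt_pow (q+1) (f x)).comp_hasFDerivAt x hdf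
          simpa [Function.comp_def] using h
        have hall := (hpow.mul hcomp).smul hdu
        refine hall.congr_fderiv (Eq.symm ?_)
        have hDΘ : ∀ a b : ℝ, fderiv ℝ Θ (f x, g x) (a, b)
            = a * fderiv ℝ Θ (f x, g x) (1, 0) + b * fderiv ℝ Θ (f x, g x) (0, 1) := by
          intro a b
          have hab : ((a, b) : ℝ × ℝ) = a • ((1:ℝ), (0:ℝ)) + b • ((0:ℝ), (1:ℝ)) := by
            simp [Prod.ext_iff]
          rw [hab, map_add, map_smul, map_smul, smul_eq_mul, smul_eq_mul]
        ext v
        simp only [ContinuousLinearMap.add_apply, ContinuousLinearMap.smul_apply,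
          ContinuousLinearMap.smulRight_apply, ContinuousLinearMap.comp_apply,
          ContinuousLinearMap.prod_apply, ContinuousLinearMap.coe_smul', Pi.smul_apply,
          smul_eq_mul, Pi.mul_apply]
        rw [hDΘ ((fderiv ℝ f x) v) ((fderiv ℝ g x) v)]
        match_scalars <;> push_cast <;> ring
    have hj1k : ((j : WithTop ℕ∞) + 1) ≤ (k : WithTop ℕ∞) := by
      exact_mod_cast (by omega : j + 1 ≤ k)
    have hf' : ContDiffOn ℝ j (fderiv ℝ f) U := hf.fderiv_of_isOpen hU hj1k
    have hg' : ContDiffOn ℝ j (fderiv ℝ g) U := hg.fderiv_of_isOpen hU hj1k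
    have hu' : ContDiffOn ℝ j (fderiv ℝ u) U := hu.fderiv_of_isOpen hU (by push_cast; rfl)
    have huj : ContDiffOn ℝ j u U := hu.of_le (by exact_mod_cast (by omega : j ≤ j+1))
    have hfj : ContDiffOn ℝ j f U := hf.of_le (by exact_mod_cast (by omega : j ≤ k))
    have hu₃ : ContDiffOn ℝ j (fun x => (fderiv ℝ f x).smulRight (u x)) U :=
      hf'.smulRight huj
    have hu₄ : ContDiffOn ℝ j (fun x => (fderiv ℝ g x).smulRight (u x)) U :=
      hg'.smulRight huj
    have hu₁ : ContDiffOn ℝ j (fun x => ((q:ℝ)+1) • (fderiv ℝ f x).smulRight (u x)) U :=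
      hu₃.const_smul _
    have hu₂ : ContDiffOn ℝ j (fun x => f x • fderiv ℝ u x) U := hfj.smul hu'
    have hΘ₁s : ∀ z : ℝ × ℝ, z ≠ 0 →
        ContDiffAt ℝ ∞ (fun z : ℝ × ℝ => z.1 * fderiv ℝ Θ z (1, 0)) z := by
      intro z hz
      have h := (hΘs z hz).fderiv_right (m := ∞) inf_add_one
      exact contDiff_fst.contDiffAt.mul (h.clm_apply contDiffAt_const)
    have hΘ₂s : ∀ z : ℝ × ℝ, z ≠ 0 →
        ContDiffAt ℝ ∞ (fun z : ℝ × ℝ => z.1 * fderiv ℝ Θ z (0, 1)) z := by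
      intro z hz
      have h := (hΘs z hz).fderiv_right (m := ∞) inf_add_one
      exact contDiff_fst.contDiffAt.mul (h.clm_apply contDiffAt_const)
    have c1 := @ih (by omega) q hq Θ hΘs hΘh ((Fin n → ℝ) →L[ℝ] E) inferInstance inferInstance
      (fun x => ((q:ℝ)+1) • (fderiv ℝ f x).smulRight (u x)) hu₁
    have c2 := @ih (by omega) q hq Θ hΘs hΘh ((Fin n → ℝ) →L[ℝ] E) inferInstance inferInstance
      (fun x => f x • fderiv ℝ u x) hu₂
    have c3 := @ih (by omega) q hq (fun z : ℝ × ℝ => z.1 * fderiv ℝ Θ z (1, 0)) hΘ₁s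
      (fun t ht z => homog_deriv Θ hΘs hΘh (1, 0) t ht z) ((Fin n → ℝ) →L[ℝ] E)
      inferInstance inferInstance
      (fun x => (fderiv ℝ f x).smulRight (u x)) hu₃
    have c4 := @ih (by omega) q hq (fun z : ℝ × ℝ => z.1 * fderiv ℝ Θ z (0, 1)) hΘ₂s
      (fun t ht z => homog_deriv Θ hΘs hΘh (0, 1) t ht z) ((Fin n → ℝ) →L[ℝ] E)
      inferInstance inferInstance
      (fun x => (fderiv ℝ g x).smulRight (u x)) hu₄
    have claim2 := ((c1.add c2).add c3).add c4
    rw [show ((j + 1 : ℕ) : WithTop ℕ∞) = (j : WithTop ℕ∞) + 1 from by push_cast; rfl]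
    rw [contDiffOn_succ_iff_fderiv_of_isOpen hU]
    refine ⟨fun x hx => ((claim1 x hx).differentiableAt).differentiableWithinAt, ?_, ?_⟩
    · intro h; exact absurd h (by exact_mod_cast WithTop.natCast_ne_top j)
    · exact claim2.congr fun x hx => (claim1 x hx).fderiv


theorem stmt_9 (n k l : ℕ) (hk : 0 < k) (hl : 0 < l)
    (U : Set (Fin n → ℝ)) (hU : IsOpen U)
    (v₁ v₂ : (Fin n → ℝ) → ℝ)
    (h₁ : ∀ x ∈ U, 0 ≤ v₁ x) (h₂ : ∀ x ∈ U, 0 ≤ v₂ x)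
    (hv₁ : ContDiffOn ℝ k (fun x => (v₁ x) ^ ((1 : ℝ) / (2 * k * l))) U)
    (hv₂ : ContDiffOn ℝ k (fun x => (v₂ x) ^ ((1 : ℝ) / (2 * k * l))) U) :
    ContDiffOn ℝ k
      (fun x => (v₁ x ^ 2 / (v₁ x + v₂ x)) ^ ((1 : ℝ) / l)) U := by
  have hl' : (l:ℝ) ≠ 0 := Nat.cast_ne_zero.mpr (by omega)
  have hkl' : (2:ℝ) * k * l ≠ 0 := by
    have : (k:ℝ) ≠ 0 := Nat.cast_ne_zero.mpr (by omega)
    positivity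
  set e : ℝ := -((1:ℝ)/l) with he
  set Θ₀ : ℝ × ℝ → ℝ := fun z => z.1 ^ (2*k) * (z.1 ^ (2*k*l) + z.2 ^ (2*k*l)) ^ e with hΘ₀
  have hev : Even (2*k*l) := ⟨k*l, by ring⟩
  have hΘ₀s : ∀ z : ℝ × ℝ, z ≠ 0 → ContDiffAt ℝ ∞ Θ₀ z := by
    intro z hz
    have h12 : z.1 ≠ 0 ∨ z.2 ≠ 0 := by
      by_contra h
      push_neg at h
      exact hz (Prod.ext h.1 h.2)
    have hB : 0 < z.1 ^ (2*k*l) + z.2 ^ (2*k*l) := by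
      rcases h12 with h | h
      · exact add_pos_of_pos_of_nonneg (hev.pow_pos h) (hev.pow_nonneg _)
      · exact add_pos_of_nonneg_of_pos (hev.pow_nonneg _) (hev.pow_pos h)
    exact (contDiff_fst.pow _).contDiffAt.mul
      (((contDiff_fst.pow _).add (contDiff_snd.pow _)).contDiffAt.rpow_const_of_ne hB.ne')
  have hΘ₀h : ∀ t : ℝ, 0 < t → ∀ z : ℝ × ℝ, Θ₀ (t • z) = Θ₀ z := by
    intro t ht z
    have hB0 : (0:ℝ) ≤ z.1 ^ (2*k*l) + z.2 ^ (2*k*l) :=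
      add_nonneg (hev.pow_nonneg _) (hev.pow_nonneg _)
    simp only [hΘ₀, Prod.smul_fst, Prod.smul_snd, smul_eq_mul]
    rw [mul_pow, mul_pow, mul_pow,
      show t ^ (2*k*l) * z.1 ^ (2*k*l) + t ^ (2*k*l) * z.2 ^ (2*k*l)
        = t ^ (2*k*l) * (z.1 ^ (2*k*l) + z.2 ^ (2*k*l)) from by ring,
      Real.mul_rpow (by positivity) hB0]
    have h5 : ((t ^ (2*k*l) : ℝ)) ^ e = (t ^ (2*k) : ℝ)⁻¹ := by
      rw [← Real.rpow_natCast t (2*k*l), ← Real.rpow_mul ht.le,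
        show ((2*k*l : ℕ):ℝ) * e = -((2*k : ℕ):ℝ) from by
          rw [he]; push_cast; field_simp,
        Real.rpow_neg ht.le, Real.rpow_natCast]
    rw [h5]
    have htk : (t ^ (2*k) : ℝ) ≠ 0 := pow_ne_zero _ ht.ne'
    field_simp
  have hkey := key hU hv₁ hv₂ k le_rfl (2*k) (by omega) Θ₀ hΘ₀s hΘ₀h ℝ
    (fun _ => (1:ℝ)) contDiffOn_const
  refine hkey.congr ?_
  intro x hx
  have ha : 0 ≤ v₁ x := h₁ x hx
  have hb : 0 ≤ v₂ x := h₂ x hx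
  set a := v₁ x with haa
  set b := v₂ x with hbb
  set f : ℝ := a ^ ((1 : ℝ) / (2 * k * l)) with hf
  set g : ℝ := b ^ ((1 : ℝ) / (2 * k * l)) with hg
  have hfkl : f ^ (2*k*l) = a := by
    rw [hf, ← Real.rpow_natCast _ (2*k*l), ← Real.rpow_mul ha,
      show (1 : ℝ) / (2 * k * l) * ((2*k*l : ℕ):ℝ) = 1 from by push_cast; field_simp,
      Real.rpow_one]
  have hgkl : g ^ (2*k*l) = b := by
    rw [hg, ← Real.rpow_natCast _ (2*k*l), ← Real.rpow_mul hb,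
      show (1 : ℝ) / (2 * k * l) * ((2*k*l : ℕ):ℝ) = 1 from by push_cast; field_simp,
      Real.rpow_one]
  have hfk : f ^ (2*k) = a ^ ((1:ℝ)/l) := by
    rw [hf, ← Real.rpow_natCast _ (2*k), ← Real.rpow_mul ha,
      show (1 : ℝ) / (2 * k * l) * ((2*k : ℕ):ℝ) = 1/l from by
        push_cast; field_simp]
  show (a ^ 2 / (a + b)) ^ ((1 : ℝ) / l) = (f ^ (2*k) * Θ₀ (f, g)) • (1:ℝ)
  rw [smul_eq_mul, mul_one, hΘ₀]
  simp only [hfkl, hgkl, hfk]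
  rcases eq_or_lt_of_le (add_nonneg ha hb) with hs | hs
  · have ha0 : a = 0 := by linarith
    have hb0 : b = 0 := by linarith
    rw [ha0, hb0]
    rw [he]
    simp [Real.zero_rpow, inv_eq_zero, neg_eq_zero, hl', one_div]
  · have hsum : (0:ℝ) < a + b := hs
    have h2l : (a ^ 2) ^ ((1:ℝ)/l) = a ^ ((1:ℝ)/l) * a ^ ((1:ℝ)/l) := by
      rw [← Real.rpow_natCast a 2, ← Real.rpow_mul ha,
        show ((2:ℕ):ℝ) * (1/l) = 1/l + 1/l from by push_cast; ring,
        Real.rpow_add' ha (by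
          have : (1:ℝ)/l ≠ 0 := one_div_ne_zero hl'
          intro hc; apply this; linarith)]
    rw [Real.div_rpow (by positivity) hsum.le, h2l, he, Real.rpow_neg hsum.le]
    field_simp
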